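/- Let λ > 0 and define, for y > λ, x^h(y) = (1/2)·arcsinh( cosh λ · sinh² y / √(sinh² y − sinh² λ) ). Then x^h is strictly decreasing on (λ, arcsinh(√2·sinh λ)] and strictly increasing on [arcsinh(√2·sinh λ), ∞), and x^h(y) → ∞ both as y → λ⁺ and as y → ∞. -/

import Mathlib

open Real Set Filter Topology

private lemma phi_lt_phi {a u v : ℝ} (hu : 0 < u) (hv : 0 < v) (huv : u < v)
    (h : a < u * v) : u + a / u < v + a / v := by
  have e1 : u + a / u = (u * u + a) / u := by field_simp
  have e2 : v + a / v = (v * v + a) / v := by field_simp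
  rw [e1, e2, div_lt_div_iff₀ hu hv]
  nlinarith [mul_pos (sub_pos.2 huv) (sub_pos.2 h)]

private lemma phi_gt_phi {a u v : ℝ} (hu : 0 < u) (hv : 0 < v) (huv : u < v)
    (h : u * v < a) : v + a / v < u + a / u := by
  have e1 : u + a / u = (u * u + a) / u := by field_simp
  have e2 : v + a / v = (v * v + a) / v := by field_simp
  rw [e1, e2, div_lt_div_iff₀ hv hu]
  nlinarith [mul_pos (sub_pos.2 huv) (sub_pos.2 h)]

private lemma tendsto_arsinh_atTop : Tendsto Real.arsinh atTop atTop :=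
  tendsto_atTop_atTop_of_monotone (fun _ _ h => Real.arsinh_le_arsinh.2 h)
    (fun b => ⟨Real.sinh b, by rw [Real.arsinh_sinh]⟩)

private lemma tendsto_sqrt_atTop' : Tendsto Real.sqrt atTop atTop :=
  tendsto_atTop_atTop_of_monotone (fun _ _ h => Real.sqrt_le_sqrt h)
    (fun b => ⟨(max b 0) ^ 2, by
      rw [Real.sqrt_sq (le_max_right b 0)]; exact le_max_left b 0⟩)

private lemma tendsto_sinh_atTop' : Tendsto Real.sinh atTop atTop :=
  tendsto_atTop_atTop_of_monotone (fun _ _ h => Real.sinh_le_sinh.2 h)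
    (fun b => ⟨Real.arsinh b, by rw [Real.sinh_arsinh]⟩)

/-- Monotonicity and limiting behaviour of the function `x^h` from the paper. -/
theorem stmt18 (l : ℝ) (hl : 0 < l) :
    let xh : ℝ → ℝ := fun y =>
      (1 / 2) * Real.arsinh (Real.cosh l * Real.sinh y ^ 2 /
        Real.sqrt (Real.sinh y ^ 2 - Real.sinh l ^ 2))
    StrictAntiOn xh (Ioc l (Real.arsinh (Real.sqrt 2 * Real.sinh l))) ∧
    StrictMonoOn xh (Ici (Real.arsinh (Real.sqrt 2 * Real.sinh l))) ∧
    Tendsto xh (nhdsWithin l (Ioi l)) atTop ∧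
    Tendsto xh atTop atTop := by
  intro xh
  have hsl : 0 < Real.sinh l := Real.sinh_pos_iff.2 hl
  set a : ℝ := Real.sinh l ^ 2 with ha
  have ha0 : 0 < a := by positivity
  set y0 : ℝ := Real.arsinh (Real.sqrt 2 * Real.sinh l) with hy0
  have hsqrt2 : (1 : ℝ) < Real.sqrt 2 := by
    rw [show (1:ℝ) = Real.sqrt 1 by simp]
    exact Real.sqrt_lt_sqrt (by norm_num) (by norm_num)
  have hly0 : l < y0 := by
    have h1 : Real.sinh l < Real.sqrt 2 * Real.sinh l := by nlinarith
    have := Real.arsinh_lt_arsinh.2 h1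
    rwa [Real.arsinh_sinh] at this
  set S : ℝ → ℝ := fun y => Real.sqrt (Real.sinh y ^ 2 - a) with hS
  have hSpos : ∀ y, l < y → 0 < S y := by
    intro y hy
    have h1 : Real.sinh l < Real.sinh y := Real.sinh_lt_sinh.2 hy
    apply Real.sqrt_pos.2; nlinarith
  have hSsq : ∀ y, l < y → (S y) ^ 2 = Real.sinh y ^ 2 - a := by
    intro y hy
    have h1 : Real.sinh l < Real.sinh y := Real.sinh_lt_sinh.2 hy
    apply Real.sq_sqrt; nlinarith
  have hxh : ∀ y, l < y →
      xh y = (1 / 2) * Real.arsinh (Real.cosh l * (S y + a / S y)) := by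
    intro y hy
    have h0 := hSpos y hy
    have h2 := hSsq y hy
    show (1 / 2) * Real.arsinh (Real.cosh l * Real.sinh y ^ 2 / S y) = _
    have heq : Real.cosh l * Real.sinh y ^ 2 / S y
        = Real.cosh l * (S y + a / S y) := by
      have hsy : Real.sinh y ^ 2 = S y ^ 2 + a := by linarith
      rw [hsy]
      field_simp
    rw [heq]
  have hSy0 : S y0 = Real.sinh l := by
    have h1 : Real.sinh y0 = Real.sqrt 2 * Real.sinh l := Real.sinh_arsinh _
    have h2 : Real.sinh y0 ^ 2 = 2 * a := by
      rw [h1, mul_pow, Real.sq_sqrt (by norm_num : (0:ℝ) ≤ 2), ha]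
    show Real.sqrt (Real.sinh y0 ^ 2 - a) = _
    rw [h2, show 2 * a - a = a by ring, ha, Real.sqrt_sq hsl.le]
  have hSmono : ∀ y1 y2, l < y1 → y1 < y2 → S y1 < S y2 := by
    intro y1 y2 h1 h12
    have hs1 : Real.sinh l < Real.sinh y1 := Real.sinh_lt_sinh.2 h1
    have hs2 : Real.sinh y1 < Real.sinh y2 := Real.sinh_lt_sinh.2 h12
    apply Real.sqrt_lt_sqrt (by nlinarith)
    nlinarith
  have hSle : ∀ y, l < y → y ≤ y0 → S y ≤ Real.sinh l := by
    intro y hy hy0'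
    rcases eq_or_lt_of_le hy0' with h | h
    · rw [h, hSy0]
    · exact (hSy0 ▸ (hSmono y y0 hy h)).le
  have key : ∀ y1 y2, l < y1 → y1 < y2 →
      ((S y1 * S y2 < a → xh y2 < xh y1) ∧ (a < S y1 * S y2 → xh y1 < xh y2)) := by
    intro y1 y2 h1 h12
    have h2 : l < y2 := h1.trans h12
    have hp1 := hSpos y1 h1
    have hp2 := hSpos y2 h2
    have hs12 := hSmono y1 y2 h1 h12
    rw [hxh y1 h1, hxh y2 h2]
    constructor
    · intro hlt
      apply mul_lt_mul_of_pos_left _ (by norm_num : (0:ℝ) < 1/2)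
      rw [Real.arsinh_lt_arsinh]
      exact mul_lt_mul_of_pos_left (phi_gt_phi hp1 hp2 hs12 hlt) (Real.cosh_pos l)
    · intro hlt
      apply mul_lt_mul_of_pos_left _ (by norm_num : (0:ℝ) < 1/2)
      rw [Real.arsinh_lt_arsinh]
      exact mul_lt_mul_of_pos_left (phi_lt_phi hp1 hp2 hs12 hlt) (Real.cosh_pos l)
  refine ⟨?_, ?_, ?_, ?_⟩
  · -- StrictAntiOn on Ioc l y0
    intro y1 hy1 y2 hy2 h12
    have h1 : l < y1 := hy1.1
    apply (key y1 y2 h1 h12).1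
    have hb1 : S y1 < Real.sinh l := by
      have := hSmono y1 y2 h1 h12
      have := hSle y2 (h1.trans h12) hy2.2
      linarith
    have hb2 : S y2 ≤ Real.sinh l := hSle y2 (h1.trans h12) hy2.2
    have hp1 := hSpos y1 h1
    have hp2 := hSpos y2 (h1.trans h12)
    nlinarith
  · -- StrictMonoOn on Ici y0
    intro y1 hy1 y2 hy2 h12
    have h1 : l < y1 := hly0.trans_le hy1
    apply (key y1 y2 h1 h12).2
    have hb1 : Real.sinh l ≤ S y1 := by
      rcases eq_or_lt_of_le (mem_Ici.mp hy1) with h | h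
      · rw [← h, hSy0]
      · exact (hSy0 ▸ hSmono y0 y1 hly0 h).le
    have hb2 : Real.sinh l < S y2 := lt_of_le_of_lt hb1 (hSmono y1 y2 h1 h12)
    nlinarith
  · -- Tendsto at l from the right
    have hnum : Tendsto (fun y => Real.cosh l * Real.sinh y ^ 2) (𝓝[>] l)
        (𝓝 (Real.cosh l * Real.sinh l ^ 2)) := by
      apply Tendsto.mono_left _ nhdsWithin_le_nhds
      exact (continuous_const.mul ((Real.continuous_sinh.pow 2))).tendsto l
    have hden : Tendsto S (𝓝[>] l) (𝓝[>] 0) := by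
      rw [tendsto_nhdsWithin_iff]
      constructor
      · apply Tendsto.mono_left _ nhdsWithin_le_nhds
        have hc : Continuous S := Real.continuous_sqrt.comp
          ((Real.continuous_sinh.pow 2).sub continuous_const)
        have : S l = 0 := by
          show Real.sqrt (Real.sinh l ^ 2 - a) = 0
          rw [ha, sub_self, Real.sqrt_zero]
        rw [← this]
        exact hc.tendsto l
      · filter_upwards [self_mem_nhdsWithin] with y hy
        exact hSpos y hy
    have hinv : Tendsto (fun y => (S y)⁻¹) (𝓝[>] l) atTop := hden.inv_tendsto_nhdsGT_zero
    have hF : Tendsto (fun y => Real.cosh l * Real.sinh y ^ 2 / S y) (𝓝[>] l) atTop := by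
      simp only [div_eq_mul_inv]
      exact hnum.pos_mul_atTop (by positivity) hinv
    have := (tendsto_arsinh_atTop.comp hF).const_mul_atTop
      (by norm_num : (0:ℝ) < 1/2)
    exact this
  · -- Tendsto atTop
    have hSt : Tendsto S atTop atTop := by
      apply tendsto_sqrt_atTop'.comp
      apply tendsto_atTop_add_const_right _ (-a)
      exact (tendsto_pow_atTop (two_ne_zero)).comp tendsto_sinh_atTop'
    have hF : Tendsto (fun y => Real.cosh l * Real.sinh y ^ 2 / S y) atTop atTop := by
      apply tendsto_atTop_mono' _ _ hSt
      filter_upwards [eventually_gt_atTop l] with y hy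
      have hp := hSpos y hy
      have h2 := hSsq y hy
      have hc : 1 ≤ Real.cosh l := Real.one_le_cosh l
      rw [le_div_iff₀ hp]
      nlinarith
    exact (tendsto_arsinh_atTop.comp hF).const_mul_atTop (by norm_num : (0:ℝ) < 1/2)
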